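/- Let S ⊆ ω₁ be stationary. Then empty has a winning strategy in the pressing down game PD_{≤ω}(NS,S) and empty has a winning strategy in the Banach–Mazur game BM_{≤ω}(NS,S), where NS is the nonstationary ideal on ω₁. -/

import Mathlib

open Set

noncomputable section

namespace BMPDGames

/-- `I` is an ideal on the (regular uncountable) ordinal `κ`:  a collection of subsets of
`κ` containing all singletons, closed under subsets and finite unions, with `κ ∉ I`. -/
def IsIdealOn (κ : Ordinal) (I : Set (Set Ordinal)) : Prop :=
  (∀ A ∈ I, A ⊆ Set.Iio κ) ∧
  (∀ β < κ, ({β} : Set Ordinal) ∈ I) ∧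
  (∀ A B : Set Ordinal, A ⊆ B → B ∈ I → A ∈ I) ∧
  (∀ A ∈ I, ∀ B ∈ I, A ∪ B ∈ I) ∧
  Set.Iio κ ∉ I

/-- `I` is fine: every bounded subset of `κ` belongs to `I`. -/
def IsFineIdeal (κ : Ordinal) (I : Set (Set Ordinal)) : Prop :=
  ∀ A : Set Ordinal, A ⊆ Set.Iio κ → (∃ β < κ, A ⊆ Set.Iio β) → A ∈ I

/-- `I` is normal: the diagonal union of `κ` many members of `I` belongs to `I`. -/
def IsNormalIdeal (κ : Ordinal) (I : Set (Set Ordinal)) : Prop :=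
  ∀ A : Ordinal → Set Ordinal, (∀ γ, γ < κ → A γ ∈ I) →
    {β : Ordinal | β < κ ∧ ∃ γ < β, β ∈ A γ} ∈ I

/-- `I` is a fine normal ideal on `κ`. -/
def FineNormalIdeal (κ : Ordinal) (I : Set (Set Ordinal)) : Prop :=
  IsIdealOn κ I ∧ IsFineIdeal κ I ∧ IsNormalIdeal κ I

/-- `κ` is (as an ordinal) a regular uncountable cardinal. -/
def RegUncountable (κ : Ordinal) : Prop :=
  κ.card.IsRegular ∧ Cardinal.aleph0 < κ.card ∧ κ.card.ord = κ

/-- `C` is a club (closed unbounded) subset of `κ`: it is closed under suprema of its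
bounded nonempty subsets and unbounded in `κ`. -/
def IsClubIn (κ : Ordinal) (C : Set Ordinal) : Prop :=
  C ⊆ Set.Iio κ ∧
  (∀ D : Set Ordinal, D ⊆ C → D.Nonempty → sSup D < κ → sSup D ∈ C) ∧
  (∀ β, β < κ → ∃ γ ∈ C, β < γ)

/-- `S` is a stationary subset of `κ`: it meets every club. -/
def IsStationaryIn (κ : Ordinal) (S : Set Ordinal) : Prop :=
  S ⊆ Set.Iio κ ∧ ∀ C : Set Ordinal, IsClubIn κ C → (S ∩ C).Nonempty

/-- The nonstationary ideal on `κ`: subsets of `κ` disjoint from some club. -/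
def NSIdeal (κ : Ordinal) : Set (Set Ordinal) :=
  {A | A ⊆ Set.Iio κ ∧ ∃ C : Set Ordinal, IsClubIn κ C ∧ A ∩ C = ∅}

/-- `E^κ_ω`, the set of ordinals below `κ` of cofinality `ω`. -/
def Ecofomega (κ : Ordinal) : Set Ordinal :=
  {α : Ordinal | α < κ ∧ Ordinal.cof α = Cardinal.aleph0}

/-- The intersection of the values `T β` for `β < α`. -/
def InterBelow (T : Ordinal → Set Ordinal) (α : Ordinal) : Set Ordinal :=
  ⋂ β ∈ Set.Iio α, T β

/-! ### The Banach–Mazur game `BM_{<ζ}(I,S)` (empty moves first at every stage).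

A strategy for a player is represented as a function giving that player's move at stage `α`
as a function of the opponent's moves (it may only depend on the moves made before the
player's move at stage `α`, which is the first conjunct in each definition below).  A
strategy is winning if it always produces legal moves (as long as the opponent has played
legally and the game is not yet over) and every run in which the opponent plays legally is
won by the player. -/

/-- `σ` is a winning strategy for the player *empty* in `BM_{<ζ}(I,S)`.
Here `T : Ordinal → Set Ordinal` ranges over the sequences of moves of nonempty, and
empty's move at stage `α` is `σ α T`. Empty wins a run iff at some stage `α < ζ`
the intersection of all moves made before stage `α` belongs to `I`. -/
def EmptyBMStratWins (ζ : Ordinal) (I : Set (Set Ordinal)) (S : Set Ordinal)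
    (σ : Ordinal → (Ordinal → Set Ordinal) → Set Ordinal) : Prop :=
  (∀ (α : Ordinal) (T T' : Ordinal → Set Ordinal),
      (∀ β < α, T β = T' β) → σ α T = σ α T') ∧
  ∀ T : Ordinal → Set Ordinal,
    (∀ α < ζ, (∀ β < α, T β ∉ I ∧ T β ⊆ σ β T) → InterBelow T α ∉ I →
      σ α T ∉ I ∧ σ α T ⊆ S ∧ ∀ β < α, σ α T ⊆ T β) ∧
    ((∀ α < ζ, T α ∉ I ∧ T α ⊆ σ α T) → ∃ α < ζ, InterBelow T α ∈ I)

/-- Empty has a winning strategy in `BM_{<ζ}(I,S)`. -/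
def EmptyWinsBM (ζ : Ordinal) (I : Set (Set Ordinal)) (S : Set Ordinal) : Prop :=
  ∃ σ, EmptyBMStratWins ζ I S σ

/-- Nonempty has a winning strategy in `BM_{<ζ}(I,S)`.
Here `Sq : Ordinal → Set Ordinal` ranges over the sequences of moves of empty, and
nonempty's move at stage `α` is `τ α Sq`.  The strategy must respond legally to legal
play by empty, and guarantee that empty is never stuck, i.e. that the intersection of
all previous moves never lies in `I` at any stage `α < ζ`. -/
def NonemptyWinsBM (ζ : Ordinal) (I : Set (Set Ordinal)) (S : Set Ordinal) : Prop :=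
  ∃ τ : Ordinal → (Ordinal → Set Ordinal) → Set Ordinal,
    (∀ (α : Ordinal) (Sq Sq' : Ordinal → Set Ordinal),
        (∀ β ≤ α, Sq β = Sq' β) → τ α Sq = τ α Sq') ∧
    ∀ Sq : Ordinal → Set Ordinal, ∀ α, α < ζ →
      ((∀ β ≤ α, Sq β ∉ I ∧ Sq β ⊆ S ∧ ∀ γ < β, Sq β ⊆ Sq γ ∩ τ γ Sq) →
        τ α Sq ∉ I ∧ τ α Sq ⊆ Sq α) ∧
      ((∀ β < α, Sq β ∉ I ∧ Sq β ⊆ S ∧ ∀ γ < β, Sq β ⊆ Sq γ ∩ τ γ Sq) →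
        InterBelow (fun β => Sq β ∩ τ β Sq) α ∉ I)

/-! ### The variant `BM'_{<ζ}(I,S)` in which nonempty makes the first move at stage `0`
(playing an `I`-positive `T 0 ⊆ S`), after which play continues as in `BM` with empty
moving first at every later stage. -/

/-- `σ` is a winning strategy for empty in `BM'_{<ζ}(I,S)` (`σ` is only used at
stages `α > 0`, since nonempty alone moves at stage `0`). -/
def EmptyBMPrimeStratWins (ζ : Ordinal) (I : Set (Set Ordinal)) (S : Set Ordinal)
    (σ : Ordinal → (Ordinal → Set Ordinal) → Set Ordinal) : Prop :=
  (∀ (α : Ordinal) (T T' : Ordinal → Set Ordinal),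
      (∀ β < α, T β = T' β) → σ α T = σ α T') ∧
  ∀ T : Ordinal → Set Ordinal,
    (∀ α, 0 < α → α < ζ → (T 0 ∉ I ∧ T 0 ⊆ S) →
      (∀ β, 0 < β → β < α → T β ∉ I ∧ T β ⊆ σ β T) → InterBelow T α ∉ I →
      σ α T ∉ I ∧ ∀ β < α, σ α T ⊆ T β) ∧
    ((0 < ζ → T 0 ∉ I ∧ T 0 ⊆ S) → (∀ α, 0 < α → α < ζ → T α ∉ I ∧ T α ⊆ σ α T) →
      ∃ α < ζ, InterBelow T α ∈ I)

/-- Empty has a winning strategy in `BM'_{<ζ}(I,S)`. -/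
def EmptyWinsBMPrime (ζ : Ordinal) (I : Set (Set Ordinal)) (S : Set Ordinal) : Prop :=
  ∃ σ, EmptyBMPrimeStratWins ζ I S σ

/-- Nonempty has a winning strategy in `BM'_{<ζ}(I,S)`: a first move `T0` (an
`I`-positive subset of `S`, provided the game has any stage at all) together with
responses `τ α Sq` to empty's moves `Sq β` (`0 < β ≤ α`) at all later stages `α`. -/
def NonemptyWinsBMPrime (ζ : Ordinal) (I : Set (Set Ordinal)) (S : Set Ordinal) : Prop :=
  ∃ T0 : Set Ordinal, ∃ τ : Ordinal → (Ordinal → Set Ordinal) → Set Ordinal,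
    (0 < ζ → T0 ∉ I ∧ T0 ⊆ S) ∧
    (∀ (α : Ordinal) (Sq Sq' : Ordinal → Set Ordinal),
        (∀ β ≤ α, Sq β = Sq' β) → τ α Sq = τ α Sq') ∧
    ∀ Sq : Ordinal → Set Ordinal, ∀ α, 0 < α → α < ζ →
      ((∀ β, 0 < β → β ≤ α →
          Sq β ∉ I ∧ Sq β ⊆ T0 ∧ ∀ γ, 0 < γ → γ < β → Sq β ⊆ Sq γ ∩ τ γ Sq) →
        τ α Sq ∉ I ∧ τ α Sq ⊆ Sq α) ∧
      ((∀ β, 0 < β → β < α →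
          Sq β ∉ I ∧ Sq β ⊆ T0 ∧ ∀ γ, 0 < γ → γ < β → Sq β ⊆ Sq γ ∩ τ γ Sq) →
        (T0 ∩ ⋂ β ∈ Set.Ioo (0 : Ordinal) α, (Sq β ∩ τ β Sq)) ∉ I)

/-! ### The pressing down game `PD_{<ζ}(I,S)`.

At each stage `α < ζ` empty plays a regressive function `f_α : κ → κ` and nonempty plays
a set `T_α ⊆ S` contained in all previous `T_β` on which `f_α` is constant.  Empty wins a
run iff `T_α ∈ I` for some `α < ζ`. -/

/-- Empty has a winning strategy in `PD_{<ζ}(I,S)`: a (history-dependent) choice of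
regressive functions such that in every run in which nonempty plays legally, some move
of nonempty lies in `I`. -/
def EmptyWinsPD (ζ : Ordinal) (I : Set (Set Ordinal)) (S : Set Ordinal) : Prop :=
  ∃ σ : Ordinal → (Ordinal → Set Ordinal) → (Ordinal → Ordinal),
    (∀ (α : Ordinal) (T T' : Ordinal → Set Ordinal),
        (∀ β < α, T β = T' β) → σ α T = σ α T') ∧
    (∀ (α : Ordinal) (T : Ordinal → Set Ordinal) (β : Ordinal), 0 < β → σ α T β < β) ∧
    ∀ T : Ordinal → Set Ordinal,
      (∀ α, α < ζ →
        T α ⊆ S ∧ (∀ β < α, T α ⊆ T β) ∧ ∃ c, ∀ x ∈ T α, σ α T x = c) →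
      ∃ α, α < ζ ∧ T α ∈ I

/-- Nonempty has a winning strategy in `PD_{<ζ}(I,S)`: responses `τ α g` to the
sequence `g` of regressive functions played by empty, which are always legal
(homogeneous subsets of `S` and of all previous responses) and never lie in `I`. -/
def NonemptyWinsPD (ζ : Ordinal) (I : Set (Set Ordinal)) (S : Set Ordinal) : Prop :=
  ∃ τ : Ordinal → (Ordinal → (Ordinal → Ordinal)) → Set Ordinal,
    (∀ (α : Ordinal) (g g' : Ordinal → (Ordinal → Ordinal)),
        (∀ β ≤ α, g β = g' β) → τ α g = τ α g') ∧
    ∀ g : Ordinal → (Ordinal → Ordinal), (∀ α β, 0 < β → g α β < β) →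
      ∀ α, α < ζ →
        τ α g ⊆ S ∧ (∀ β < α, τ α g ⊆ τ β g) ∧ (∃ c, ∀ x ∈ τ α g, g α x = c) ∧
        τ α g ∉ I

/-! ### The games of length `ω + 1` on `κ`: `BM_{≤ω}(I,S)` and the ideal game.

In `BM_{≤ω}(I,S)` the players move at the finite stages `n < ω` and empty wins a run iff
`⋂_{n<ω} S_n ∈ I`; in the ideal game (played on `κ` itself) empty wins iff
`⋂_{n<ω} S_n = ∅`. -/

/-- `σ` is a winning strategy for empty in `BM_{≤ω}(I,S)`. -/
def EmptyBMOmegaStratWins (I : Set (Set Ordinal)) (S : Set Ordinal)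
    (σ : ℕ → (ℕ → Set Ordinal) → Set Ordinal) : Prop :=
  (∀ (n : ℕ) (T T' : ℕ → Set Ordinal), (∀ m < n, T m = T' m) → σ n T = σ n T') ∧
  ∀ T : ℕ → Set Ordinal,
    (∀ n, (∀ m < n, T m ∉ I ∧ T m ⊆ σ m T) →
      σ n T ∉ I ∧ σ n T ⊆ S ∧ ∀ m < n, σ n T ⊆ T m) ∧
    ((∀ n, T n ∉ I ∧ T n ⊆ σ n T) → (⋂ n, σ n T) ∈ I)

/-- Empty has a winning strategy in `BM_{≤ω}(I,S)`. -/
def EmptyWinsBMOmega (I : Set (Set Ordinal)) (S : Set Ordinal) : Prop :=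
  ∃ σ, EmptyBMOmegaStratWins I S σ

/-- Nonempty has a winning strategy in `BM_{≤ω}(I,S)`. -/
def NonemptyWinsBMOmega (I : Set (Set Ordinal)) (S : Set Ordinal) : Prop :=
  ∃ τ : ℕ → (ℕ → Set Ordinal) → Set Ordinal,
    (∀ (n : ℕ) (Sq Sq' : ℕ → Set Ordinal), (∀ m ≤ n, Sq m = Sq' m) → τ n Sq = τ n Sq') ∧
    ∀ Sq : ℕ → Set Ordinal,
      (∀ n, (∀ m ≤ n, Sq m ∉ I ∧ Sq m ⊆ S ∧ ∀ k < m, Sq m ⊆ Sq k ∩ τ k Sq) →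
        τ n Sq ∉ I ∧ τ n Sq ⊆ Sq n) ∧
      ((∀ n, Sq n ∉ I ∧ Sq n ⊆ S ∧ ∀ k < n, Sq n ⊆ Sq k ∩ τ k Sq) →
        (⋂ n, Sq n) ∉ I)

/-- Empty has a winning strategy in the ideal game on `I` (played on `κ`). -/
def EmptyWinsIdealGame (κ : Ordinal) (I : Set (Set Ordinal)) : Prop :=
  ∃ σ : ℕ → (ℕ → Set Ordinal) → Set Ordinal,
    (∀ (n : ℕ) (T T' : ℕ → Set Ordinal), (∀ m < n, T m = T' m) → σ n T = σ n T') ∧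
    ∀ T : ℕ → Set Ordinal,
      (∀ n, (∀ m < n, T m ∉ I ∧ T m ⊆ σ m T) →
        σ n T ∉ I ∧ σ n T ⊆ Set.Iio κ ∧ ∀ m < n, σ n T ⊆ T m) ∧
      ((∀ n, T n ∉ I ∧ T n ⊆ σ n T) → (⋂ n, σ n T) = ∅)

/-- Nonempty has a winning strategy in the ideal game on `I` (played on `κ`). -/
def NonemptyWinsIdealGame (κ : Ordinal) (I : Set (Set Ordinal)) : Prop :=
  ∃ τ : ℕ → (ℕ → Set Ordinal) → Set Ordinal,
    (∀ (n : ℕ) (Sq Sq' : ℕ → Set Ordinal), (∀ m ≤ n, Sq m = Sq' m) → τ n Sq = τ n Sq') ∧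
    ∀ Sq : ℕ → Set Ordinal,
      (∀ n, (∀ m ≤ n, Sq m ∉ I ∧ Sq m ⊆ Set.Iio κ ∧ ∀ k < m, Sq m ⊆ Sq k ∩ τ k Sq) →
        τ n Sq ∉ I ∧ τ n Sq ⊆ Sq n) ∧
      ((∀ n, Sq n ∉ I ∧ Sq n ⊆ Set.Iio κ ∧ ∀ k < n, Sq n ⊆ Sq k ∩ τ k Sq) →
        (⋂ n, Sq n).Nonempty)

/-- `ω₁`, the first uncountable cardinal, as an ordinal. -/
def omega1 : Ordinal := (Cardinal.aleph 1).ord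

lemma omega1_isLimit : Order.IsSuccLimit omega1 :=
  Cardinal.isSuccLimit_ord (Cardinal.aleph0_le_aleph 1)

lemma omega1_pos : 0 < omega1 := omega1_isLimit.pos

lemma succ_lt_omega1 {β : Ordinal} (h : β < omega1) : β + 1 < omega1 := by
  rw [Ordinal.add_one_eq_succ]
  exact omega1_isLimit.succ_lt h

lemma countable_Iio {β : Ordinal} (h : β < omega1) : (Set.Iio β).Countable := by
  rw [← Cardinal.le_aleph0_iff_set_countable, Ordinal.mk_Iio_ordinal]
  have h1 : β.card ≤ Cardinal.aleph0 := by
    have := Cardinal.lt_ord.mp h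
    rwa [← Cardinal.succ_aleph0, Order.lt_succ_iff] at this
  exact (Cardinal.lift_le.mpr h1).trans_eq Cardinal.lift_aleph0

/-- enumeration of `Iio β` by naturals, for `0 < β < ω₁`. -/
noncomputable def enum (β : Ordinal) : ℕ → Ordinal :=
  if h : 0 < β ∧ β < omega1 then
    ((countable_Iio h.2).exists_eq_range ⟨0, h.1⟩).choose
  else fun _ => 0

lemma enum_range {β : Ordinal} (h0 : 0 < β) (h1 : β < omega1) :
    Set.Iio β = Set.range (enum β) := by
  rw [enum, dif_pos ⟨h0, h1⟩]
  exact ((countable_Iio h1).exists_eq_range ⟨0, h0⟩).choose_spec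

lemma enum_lt {β : Ordinal} (h0 : 0 < β) (n : ℕ) : enum β n < β := by
  by_cases h1 : β < omega1
  · have : enum β n ∈ Set.Iio β := by
      rw [enum_range h0 h1]; exact ⟨n, rfl⟩
    exact this
  · rw [enum, dif_neg (by tauto)]
    exact h0

lemma enum_unique {β β' : Ordinal} (h0 : 0 < β) (h1 : β < omega1)
    (h0' : 0 < β') (h1' : β' < omega1) (h : ∀ n, enum β n = enum β' n) : β = β' := by
  have hr : Set.Iio β = Set.Iio β' := by
    rw [enum_range h0 h1, enum_range h0' h1', funext h]
  rcases lt_trichotomy β β' with hlt | he | hlt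
  · have hm : β ∈ Set.Iio β' := Set.mem_Iio.mpr hlt
    rw [← hr] at hm
    exact absurd (Set.mem_Iio.mp hm) (lt_irrefl β)
  · exact he
  · have hm : β' ∈ Set.Iio β := Set.mem_Iio.mpr hlt
    rw [hr] at hm
    exact absurd (Set.mem_Iio.mp hm) (lt_irrefl β')

lemma bddAbove_of_subset_Iio {A : Set Ordinal} (h : A ⊆ Set.Iio omega1) :
    BddAbove A := ⟨omega1, fun x hx => (h hx).le⟩

lemma sSup_range_lt {x : ℕ → Ordinal} (h : ∀ k, x k < omega1) :
    sSup (Set.range x) < omega1 := by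
  have : sSup (Set.range x) = iSup x := rfl
  rw [this]
  rw [omega1, Cardinal.ord_aleph]
  exact Ordinal.iSup_lt_omega_one (fun k => by have := h k; rwa [omega1, Cardinal.ord_aleph] at this)

lemma sSup_comp_eq {x : ℕ → Ordinal} (hb : ∀ k, x k < omega1) (hmono : Monotone x)
    (φ : ℕ → ℕ) (hφ : ∀ m, m ≤ φ m) :
    sSup (Set.range (fun m => x (φ m))) = sSup (Set.range x) := by
  have hbdd : BddAbove (Set.range x) := bddAbove_of_subset_Iio (by rintro y ⟨k, rfl⟩; exact hb k)
  have hbdd' : BddAbove (Set.range (fun m => x (φ m))) :=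
    hbdd.mono (by rintro y ⟨k, rfl⟩; exact ⟨φ k, rfl⟩)
  apply le_antisymm
  · exact csSup_le_csSup hbdd (Set.range_nonempty _) (by rintro y ⟨k, rfl⟩; exact ⟨φ k, rfl⟩)
  · apply csSup_le (Set.range_nonempty x)
    rintro y ⟨k, rfl⟩
    exact le_trans (hmono (hφ k)) (le_csSup hbdd' ⟨k, rfl⟩)

/-- iterate a step function, keeping track of `< ω₁`. -/
noncomputable def iterSeq (F : ℕ → {o : Ordinal // o < omega1} → {o : Ordinal // o < omega1})
    (b : {o : Ordinal // o < omega1}) : ℕ → {o : Ordinal // o < omega1}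
  | 0 => b
  | (k+1) => F k (iterSeq F b k)

lemma Iio_omega1_club : IsClubIn omega1 (Set.Iio omega1) := by
  refine ⟨fun x hx => hx, fun D _ _ h => h, fun β hβ => ⟨β + 1, succ_lt_omega1 hβ, ?_⟩⟩
  rw [Ordinal.add_one_eq_succ]; exact Order.lt_succ β

lemma club_inter_countable {C : ℕ → Set Ordinal} (h : ∀ n, IsClubIn omega1 (C n)) :
    IsClubIn omega1 (⋂ n, C n) := by
  refine ⟨fun x hx => (h 0).1 ((Set.mem_iInter.mp hx) 0), ?_, ?_⟩
  · intro D hD hne hlt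
    rw [Set.mem_iInter]
    intro n
    exact (h n).2.1 D (fun x hx => (Set.mem_iInter.mp (hD hx)) n) hne hlt
  · intro β hβ
    have step : ∀ (n : ℕ) (p : {o : Ordinal // o < omega1}),
        ∃ γ : Ordinal, γ ∈ C n ∧ (p : Ordinal) < γ ∧ γ < omega1 := by
      intro n p
      obtain ⟨γ, hγC, hγ⟩ := (h n).2.2 p.1 p.2
      exact ⟨γ, hγC, hγ, (h n).1 hγC⟩
    set F : ℕ → {o : Ordinal // o < omega1} → {o : Ordinal // o < omega1} :=
      fun k p => ⟨(step (Nat.unpair k).1 p).choose, (step (Nat.unpair k).1 p).choose_spec.2.2⟩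
    set x : ℕ → {o : Ordinal // o < omega1} := iterSeq F ⟨β, hβ⟩
    have hx : ∀ k, ((x (k+1)) : Ordinal) ∈ C (Nat.unpair k).1 ∧ ((x k) : Ordinal) < x (k+1) := by
      intro k
      have : x (k+1) = F k (x k) := rfl
      rw [this]
      exact ⟨(step (Nat.unpair k).1 (x k)).choose_spec.1,
        (step (Nat.unpair k).1 (x k)).choose_spec.2.1⟩
    have hsm : StrictMono (fun k => ((x k) : Ordinal)) :=
      strictMono_nat_of_lt_succ (fun k => (hx k).2)
    have hblt : ∀ k, ((x k) : Ordinal) < omega1 := fun k => (x k).2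
    set δ := sSup (Set.range (fun k => ((x k) : Ordinal))) with hδ
    have hδlt : δ < omega1 := sSup_range_lt hblt
    have hbdd : BddAbove (Set.range (fun k => ((x k) : Ordinal))) :=
      bddAbove_of_subset_Iio (by rintro y ⟨k, rfl⟩; exact hblt k)
    refine ⟨δ, ?_, ?_⟩
    · rw [Set.mem_iInter]
      intro n
      have hsup : sSup (Set.range (fun m => ((x (Nat.pair n m + 1)) : Ordinal))) = δ :=
        sSup_comp_eq hblt hsm.monotone (fun m => Nat.pair n m + 1)
          (fun m => Nat.le_succ_of_le (Nat.right_le_pair n m))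
      have hsub : Set.range (fun m => ((x (Nat.pair n m + 1)) : Ordinal)) ⊆ C n := by
        rintro y ⟨m, rfl⟩
        have := (hx (Nat.pair n m)).1
        rwa [Nat.unpair_pair] at this
      have := (h n).2.1 _ hsub (Set.range_nonempty _) (by rw [hsup]; exact hδlt)
      rwa [hsup] at this
    · have h1 : ((x 0) : Ordinal) < ((x 1) : Ordinal) := (hx 0).2
      have h2 : ((x 1) : Ordinal) ≤ δ := le_csSup hbdd ⟨1, rfl⟩
      exact lt_of_lt_of_le h1 h2

lemma club_Ioi {γ : Ordinal} (hγ : γ < omega1) :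
    IsClubIn omega1 (Set.Ioi γ ∩ Set.Iio omega1) := by
  refine ⟨fun x hx => hx.2, ?_, ?_⟩
  · intro D hD ⟨d, hd⟩ hlt
    have hbdd : BddAbove D := bddAbove_of_subset_Iio (fun x hx => (hD hx).2)
    exact ⟨lt_of_lt_of_le (hD hd).1 (le_csSup hbdd hd), hlt⟩
  · intro β hβ
    refine ⟨max β γ + 1, ⟨?_, ?_⟩, ?_⟩
    · calc γ ≤ max β γ := le_max_right β γ
        _ < max β γ + 1 := by rw [Ordinal.add_one_eq_succ]; exact Order.lt_succ _
    · exact succ_lt_omega1 (max_lt hβ hγ)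
    · calc β ≤ max β γ := le_max_left β γ
        _ < max β γ + 1 := by rw [Ordinal.add_one_eq_succ]; exact Order.lt_succ _

lemma club_inter2 {C D : Set Ordinal} (hC : IsClubIn omega1 C) (hD : IsClubIn omega1 D) :
    IsClubIn omega1 (C ∩ D) := by
  have h := club_inter_countable (C := fun n => if n = 0 then C else D)
    (fun n => by by_cases hn : n = 0 <;> simp [hn, hC, hD])
  have he : (⋂ n, if n = 0 then C else D) = C ∩ D := by
    ext x
    simp only [Set.mem_iInter, Set.mem_inter_iff]
    constructor
    · intro hx
      have h0 := hx 0
      have h1 := hx 1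
      simp at h0 h1
      exact ⟨h0, h1⟩
    · rintro ⟨h1, h2⟩ n
      by_cases hn : n = 0 <;> simp [hn, h1, h2]
  rwa [he] at h

lemma notNS_iff_stationary {A : Set Ordinal} (hA : A ⊆ Set.Iio omega1) :
    A ∉ NSIdeal omega1 ↔ IsStationaryIn omega1 A := by
  constructor
  · intro h
    refine ⟨hA, fun C hC => ?_⟩
    by_contra hc
    exact h ⟨hA, C, hC, Set.not_nonempty_iff_eq_empty.mp hc⟩
  · rintro hst ⟨_, C, hC, hE⟩
    have := hst.2 C hC
    rw [hE] at this
    exact Set.not_nonempty_empty this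

lemma bounded_NS {A : Set Ordinal} {γ : Ordinal} (hA : A ⊆ Set.Iio omega1)
    (hγ : γ < omega1) (h : ∀ x ∈ A, x ≤ γ) : A ∈ NSIdeal omega1 := by
  refine ⟨hA, Set.Ioi γ ∩ Set.Iio omega1, club_Ioi hγ, ?_⟩
  ext x
  simp only [Set.mem_inter_iff, Set.mem_Ioi, Set.mem_empty_iff_false, iff_false]
  rintro ⟨hx, hγx, _⟩
  exact absurd (h x hx) (not_le.mpr hγx)

lemma small_NS {A : Set Ordinal} (hA : A ⊆ Set.Iio omega1) (c : ℕ → Ordinal)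
    (h : ∀ β ∈ A, 0 < β → ∀ n, enum β n = c n) : A ∈ NSIdeal omega1 := by
  by_cases hp : ∃ β ∈ A, 0 < β
  · obtain ⟨β₀, hβ₀A, hβ₀⟩ := hp
    refine bounded_NS hA (hA hβ₀A) (fun x hx => ?_)
    by_cases hx0 : 0 < x
    · have : x = β₀ :=
        enum_unique hx0 (hA hx) hβ₀ (hA hβ₀A)
          (fun n => by rw [h x hx hx0 n, h β₀ hβ₀A hβ₀ n])
      exact this.le
    · have : x = 0 := by
        exact nonpos_iff_eq_zero.mp (not_lt.mp hx0)
      rw [this]; exact zero_le (a := β₀)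
  · refine bounded_NS hA omega1_pos (fun x hx => ?_)
    push_neg at hp
    exact hp x hx

/-- Intersection of clubs indexed by `Iio α` (for `α < ω₁`) is unbounded. -/
lemma club_inter_below {α : Ordinal} (hα : α < omega1) {C : Ordinal → Set Ordinal}
    (h : ∀ γ < α, IsClubIn omega1 (C γ)) {β : Ordinal} (hβ : β < omega1) :
    ∃ δ, β < δ ∧ δ < omega1 ∧ ∀ γ < α, δ ∈ C γ := by
  by_cases h0 : 0 < α
  · have hclub : IsClubIn omega1 (⋂ n, C (enum α n)) := by
      apply club_inter_countable
      intro n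
      apply h
      exact Set.mem_Iio.mp (by rw [enum_range h0 hα]; exact ⟨n, rfl⟩)
    obtain ⟨δ, hδm, hδ⟩ := hclub.2.2 β hβ
    refine ⟨δ, hδ, hclub.1 hδm, fun γ hγ => ?_⟩
    have : γ ∈ Set.range (enum α) := by rw [← enum_range h0 hα]; exact Set.mem_Iio.mpr hγ
    obtain ⟨n, rfl⟩ := this
    exact Set.mem_iInter.mp hδm n
  · refine ⟨β + 1, ?_, succ_lt_omega1 hβ, fun γ hγ => absurd hγ ?_⟩
    · rw [Ordinal.add_one_eq_succ]; exact Order.lt_succ β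
    · intro hlt
      exact h0 (lt_of_le_of_lt (zero_le (a := γ)) hlt)

/-- The diagonal intersection. -/
def diagInter (C : Ordinal → Set Ordinal) : Set Ordinal :=
  {β | β < omega1 ∧ ∀ γ < β, β ∈ C γ}

lemma diag_club {C : Ordinal → Set Ordinal} (h : ∀ γ < omega1, IsClubIn omega1 (C γ)) :
    IsClubIn omega1 (diagInter C) := by
  refine ⟨fun x hx => hx.1, ?_, ?_⟩
  · intro D hD hne hlt
    refine ⟨hlt, fun γ hγ => ?_⟩
    have hbdd : BddAbove D := bddAbove_of_subset_Iio (fun x hx => (hD hx).1)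
    obtain ⟨y, hyD, hy⟩ := exists_lt_of_lt_csSup hne hγ
    set D' := D ∩ Set.Ioi γ with hD'
    have hne' : D'.Nonempty := ⟨y, hyD, hy⟩
    have hsub' : D' ⊆ C γ := by
      rintro x ⟨hxD, hxγ⟩
      exact (hD hxD).2 γ hxγ
    have hbdd' : BddAbove D' := hbdd.mono Set.inter_subset_left
    have hsup : sSup D' = sSup D := by
      apply le_antisymm (csSup_le_csSup hbdd hne' Set.inter_subset_left)
      apply csSup_le hne
      intro x hx
      rcases le_or_gt x γ with hle | hgt
      · exact le_trans (le_trans hle hy.le) (le_csSup hbdd' ⟨hyD, hy⟩)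
      · exact le_csSup hbdd' ⟨hx, hgt⟩
    have hγω : γ < omega1 := lt_trans hγ hlt
    have := (h γ hγω).2.1 D' hsub' hne' (by rw [hsup]; exact hlt)
    rwa [hsup] at this
  · intro β hβ
    have step : ∀ (_ : ℕ) (p : {o : Ordinal // o < omega1}),
        ∃ δ : Ordinal, (p : Ordinal) < δ ∧ δ < omega1 ∧ ∀ γ < (p : Ordinal), δ ∈ C γ :=
      fun _ p => club_inter_below p.2 (fun γ hγ => h γ (lt_trans hγ p.2)) p.2
    set F : ℕ → {o : Ordinal // o < omega1} → {o : Ordinal // o < omega1} :=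
      fun k p => ⟨(step k p).choose, (step k p).choose_spec.2.1⟩
    set x : ℕ → {o : Ordinal // o < omega1} := iterSeq F ⟨β, hβ⟩
    have hx : ∀ k, ((x k) : Ordinal) < x (k+1) ∧
        ∀ γ < ((x k) : Ordinal), ((x (k+1)) : Ordinal) ∈ C γ := by
      intro k
      have : x (k+1) = F k (x k) := rfl
      rw [this]
      exact ⟨(step k (x k)).choose_spec.1, (step k (x k)).choose_spec.2.2⟩
    have hsm : StrictMono (fun k => ((x k) : Ordinal)) :=
      strictMono_nat_of_lt_succ (fun k => (hx k).1)
    have hblt : ∀ k, ((x k) : Ordinal) < omega1 := fun k => (x k).2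
    set δ := sSup (Set.range (fun k => ((x k) : Ordinal))) with hδdef
    have hδlt : δ < omega1 := sSup_range_lt hblt
    have hbdd : BddAbove (Set.range (fun k => ((x k) : Ordinal))) :=
      bddAbove_of_subset_Iio (by rintro y ⟨k, rfl⟩; exact hblt k)
    refine ⟨δ, ⟨hδlt, ?_⟩, lt_of_lt_of_le (hx 0).1 (le_csSup hbdd ⟨1, rfl⟩)⟩
    intro γ hγ
    obtain ⟨y, ⟨k, rfl⟩, hy⟩ := exists_lt_of_lt_csSup (Set.range_nonempty _) hγ
    have hsup : sSup (Set.range (fun m => ((x (k + m + 1)) : Ordinal))) = δ :=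
      sSup_comp_eq hblt hsm.monotone (fun m => k + m + 1)
        (fun m => by show m ≤ k + m + 1; omega)
    have hsub : Set.range (fun m => ((x (k + m + 1)) : Ordinal)) ⊆ C γ := by
      rintro y ⟨m, rfl⟩
      apply (hx (k + m)).2
      exact lt_of_lt_of_le hy (hsm.monotone (Nat.le_add_right k m))
    have hγω : γ < omega1 := lt_trans hγ hδlt
    have := (h γ hγω).2.1 _ hsub (Set.range_nonempty _) (by rw [hsup]; exact hδlt)
    rwa [hsup] at this

/-- Fodor's lemma for the functions `enum · n`. -/
lemma fodor {A : Set Ordinal} (hA : IsStationaryIn omega1 A) (h0 : (0 : Ordinal) ∉ A) (n : ℕ) :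
    ∃ B, B ⊆ A ∧ IsStationaryIn omega1 B ∧ (0 : Ordinal) ∉ B ∧ ∃ c, ∀ x ∈ B, enum x n = c := by
  by_contra hcon
  have hfib : ∀ c : Ordinal, ¬ IsStationaryIn omega1 {x | x ∈ A ∧ enum x n = c} := by
    intro c hst
    exact hcon ⟨_, fun x hx => hx.1, hst, fun hm => h0 hm.1, c, fun x hx => hx.2⟩
  have hD : ∀ c : Ordinal, ∃ D, IsClubIn omega1 D ∧ {x | x ∈ A ∧ enum x n = c} ∩ D = ∅ := by
    intro c
    have hsub : {x | x ∈ A ∧ enum x n = c} ⊆ Set.Iio omega1 := fun x hx => hA.1 hx.1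
    have hNS : {x | x ∈ A ∧ enum x n = c} ∈ NSIdeal omega1 := by
      by_contra hn
      exact hfib c ((notNS_iff_stationary hsub).mp hn)
    exact hNS.2
  choose D hDc hDd using hD
  obtain ⟨β, hβA, hβΔ⟩ := hA.2 (diagInter D) (diag_club (fun γ _ => hDc γ))
  have hβpos : 0 < β := pos_iff_ne_zero.mpr (fun e => h0 (e ▸ hβA))
  set c := enum β n with hc
  have hcβ : c < β := enum_lt hβpos n
  have hβD : β ∈ D c := hβΔ.2 c hcβ
  have : β ∈ {x | x ∈ A ∧ enum x n = c} ∩ D c := ⟨⟨hβA, rfl⟩, hβD⟩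
  rw [hDd c] at this
  exact this

lemma homega : Ordinal.omega0 < Ordinal.omega0 + 1 := by
  rw [Ordinal.add_one_eq_succ]; exact Order.lt_succ _

/-- Empty wins the pressing-down game. -/
lemma empty_wins_PD {S : Set Ordinal} (hS : IsStationaryIn omega1 S) :
    EmptyWinsPD (Ordinal.omega0 + 1) (NSIdeal omega1) S := by
  refine ⟨fun α _ β => enum β (α.card).toNat, fun α T T' _ => rfl, ?_, ?_⟩
  · intro α T β hβ
    exact enum_lt hβ _
  · intro T hT
    have hω := hT Ordinal.omega0 homega
    have hc : ∀ n : ℕ, ∃ cc, ∀ x ∈ T n, enum x n = cc := by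
      intro n
      obtain ⟨-, -, c, hcn⟩ := hT n (lt_trans (Ordinal.nat_lt_omega0 n) homega)
      refine ⟨c, fun x hx => ?_⟩
      have := hcn x hx
      simp only [Ordinal.card_nat, Cardinal.toNat_natCast] at this
      exact this
    choose c hc' using hc
    refine ⟨Ordinal.omega0, homega, small_NS (fun x hx => hS.1 (hω.1 hx)) c ?_⟩
    intro β hβ hβpos n
    exact hc' n β (hω.2.1 n (Ordinal.nat_lt_omega0 n) hβ)

open Classical in
/-- a stationary, `0`-free, `enum · n`-homogeneous subset of `A` (when possible). -/
noncomputable def nextSet (n : ℕ) (A : Set Ordinal) : Set Ordinal :=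
  if h : IsStationaryIn omega1 A ∧ (0 : Ordinal) ∉ A then (fodor h.1 h.2 n).choose else ∅

lemma nextSet_spec {n : ℕ} {A : Set Ordinal} (h1 : IsStationaryIn omega1 A)
    (h2 : (0 : Ordinal) ∉ A) :
    nextSet n A ⊆ A ∧ IsStationaryIn omega1 (nextSet n A) ∧ (0 : Ordinal) ∉ nextSet n A ∧
      ∃ c, ∀ x ∈ nextSet n A, enum x n = c := by
  rw [nextSet, dif_pos ⟨h1, h2⟩]
  exact (fodor h1 h2 n).choose_spec

open Classical in
/-- empty's strategy in the Banach–Mazur game. -/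
noncomputable def bmσ (S : Set Ordinal) : ℕ → (ℕ → Set Ordinal) → Set Ordinal
  | 0, _ => nextSet 0 (S ∩ Set.Ioi 0)
  | (n+1), T =>
      if T n ∉ NSIdeal omega1 ∧ T n ⊆ bmσ S n T then nextSet (n+1) (T n) else ∅

open Classical in
lemma bmσ_hist (S : Set Ordinal) :
    ∀ (n : ℕ) (T T' : ℕ → Set Ordinal), (∀ m < n, T m = T' m) → bmσ S n T = bmσ S n T' := by
  intro n
  induction n with
  | zero => intro T T' _; rfl
  | succ n ih =>
    intro T T' h
    have e : T n = T' n := h n (Nat.lt_succ_self n)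
    have e2 : bmσ S n T = bmσ S n T' := ih T T' (fun m hm => h m (hm.trans (Nat.lt_succ_self n)))
    show (if T n ∉ NSIdeal omega1 ∧ T n ⊆ bmσ S n T then nextSet (n+1) (T n) else ∅) =
      (if T' n ∉ NSIdeal omega1 ∧ T' n ⊆ bmσ S n T' then nextSet (n+1) (T' n) else ∅)
    rw [e, e2]

open Classical in
lemma bmσ_inv {S : Set Ordinal} (hS : IsStationaryIn omega1 S) :
    ∀ (n : ℕ) (T : ℕ → Set Ordinal),
      (∀ m < n, T m ∉ NSIdeal omega1 ∧ T m ⊆ bmσ S m T) →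
      IsStationaryIn omega1 (bmσ S n T) ∧ bmσ S n T ⊆ S ∧ (0 : Ordinal) ∉ bmσ S n T ∧
        (∀ m < n, bmσ S n T ⊆ T m) ∧ ∃ c, ∀ x ∈ bmσ S n T, enum x n = c := by
  intro n
  induction n with
  | zero =>
    intro T _
    have hstat : IsStationaryIn omega1 (S ∩ Set.Ioi 0) := by
      refine ⟨fun x hx => hS.1 hx.1, fun C hC => ?_⟩
      obtain ⟨x, hxS, hxC, hx0, _⟩ := hS.2 (C ∩ (Set.Ioi 0 ∩ Set.Iio omega1))
        (club_inter2 hC (club_Ioi omega1_pos))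
      exact ⟨x, ⟨hxS, hx0⟩, hxC⟩
    have h0 : (0 : Ordinal) ∉ S ∩ Set.Ioi 0 := fun h => lt_irrefl (0 : Ordinal) (Set.mem_Ioi.mp h.2)
    obtain ⟨hsub, hst, hz, hcst⟩ := nextSet_spec (n := 0) hstat h0
    exact ⟨hst, fun x hx => (hsub hx).1, hz, fun m hm => absurd hm (Nat.not_lt_zero m), hcst⟩
  | succ n ih =>
    intro T h
    have hprev := ih T (fun m hm => h m (hm.trans (Nat.lt_succ_self n)))
    obtain ⟨hn1, hn2⟩ := h n (Nat.lt_succ_self n)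
    have hTn_sub : T n ⊆ Set.Iio omega1 := fun x hx => hS.1 (hprev.2.1 (hn2 hx))
    have hTn_stat : IsStationaryIn omega1 (T n) := (notNS_iff_stationary hTn_sub).mp hn1
    have hTn_z : (0 : Ordinal) ∉ T n := fun hx => hprev.2.2.1 (hn2 hx)
    have heq : bmσ S (n+1) T = nextSet (n+1) (T n) := by
      show (if T n ∉ NSIdeal omega1 ∧ T n ⊆ bmσ S n T then nextSet (n+1) (T n) else ∅) = _
      rw [if_pos ⟨hn1, hn2⟩]
    obtain ⟨hsub, hst, hz, hcst⟩ := nextSet_spec (n := n + 1) hTn_stat hTn_z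
    rw [heq]
    refine ⟨hst, fun x hx => hprev.2.1 (hn2 (hsub hx)), hz, ?_, hcst⟩
    intro m hm
    rcases Nat.lt_succ_iff_lt_or_eq.mp hm with hm' | hm'
    · exact fun x hx => hprev.2.2.2.1 m hm' (hn2 (hsub hx))
    · rw [hm']; exact hsub

/-- Empty wins the Banach–Mazur game. -/
lemma empty_wins_BM {S : Set Ordinal} (hS : IsStationaryIn omega1 S) :
    EmptyWinsBMOmega (NSIdeal omega1) S := by
  refine ⟨bmσ S, bmσ_hist S, ?_⟩
  intro T
  constructor
  · intro n hn
    obtain ⟨hst, hsubS, _, hsubT, _⟩ := bmσ_inv hS n T hn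
    exact ⟨(notNS_iff_stationary (fun x hx => hS.1 (hsubS hx))).mpr hst, hsubS, hsubT⟩
  · intro hT
    have hinv := fun n => bmσ_inv hS n T (fun m _ => hT m)
    have hc : ∀ n, ∃ cc, ∀ x ∈ bmσ S n T, enum x n = cc := fun n => (hinv n).2.2.2.2
    choose c hc' using hc
    have hsub : (⋂ n, bmσ S n T) ⊆ Set.Iio omega1 :=
      fun x hx => hS.1 ((hinv 0).2.1 (Set.mem_iInter.mp hx 0))
    refine small_NS hsub c ?_
    intro β hβ _ n
    exact hc' n β (Set.mem_iInter.mp hβ n)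



/-- For every stationary `S ⊆ ω₁`, empty wins the pressing down game
`PD_{≤ω}(NS,S)` and empty wins the Banach–Mazur game `BM_{≤ω}(NS,S)`, where `NS` is the
nonstationary ideal on `ω₁`. -/
theorem statement16 (S : Set Ordinal) (hS : IsStationaryIn omega1 S) :
    EmptyWinsPD (Ordinal.omega0 + 1) (NSIdeal omega1) S ∧
    EmptyWinsBMOmega (NSIdeal omega1) S :=
  ⟨empty_wins_PD hS, empty_wins_BM hS⟩

end BMPDGames
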